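/- Let F be a finite field, let n and k be integers with 2 ≤ k ≤ n − 2, and let α, α' ∈ F^n each have pairwise distinct entries. If RS_{k,n}[α] = RS_{k,n}[α'], then there exist a ∈ F∖{0} and b ∈ F such that α'_i = a·α_i + b for all i = 1,…,n. -/
import Mathlib


open Polynomial

/-- Evaluation vector: `ev_α(f) = (f(α₁),…,f(α_n))`. -/
noncomputable def evalVec {F : Type*} [Field F] {n : ℕ} (α : Fin n → F) (f : F[X]) :
    Fin n → F :=
  fun i => f.eval (α i)

/-- The twisted polynomial with coefficient vector `u`:
`Σ_{i=0}^{k−1} u_i X^i + Σ_{j=1}^{ℓ} η_j u_{h_j} X^{k−1+t_j}`. -/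
noncomputable def twistedPoly {F : Type*} [Field F] (k ℓ : ℕ) (t : Fin ℓ → ℕ)
    (h : Fin ℓ → Fin k) (η : Fin ℓ → F) (u : Fin k → F) : F[X] :=
  (∑ i : Fin k, Polynomial.C (u i) * Polynomial.X ^ (i : ℕ))
    + ∑ j : Fin ℓ, Polynomial.C (η j * u (h j)) * Polynomial.X ^ (k - 1 + t j)

/-- The space of twisted polynomials `P_{k,n}[t,h,η]`. -/
def twistedPolySet (F : Type*) [Field F] (k ℓ : ℕ) (t : Fin ℓ → ℕ)
    (h : Fin ℓ → Fin k) (η : Fin ℓ → F) : Set F[X] :=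
  { p | ∃ u : Fin k → F, p = twistedPoly k ℓ t h η u }

/-- The twisted Reed–Solomon code `TRS_{k,n}[α,t,h,η]`, as a subset of `F^n`. -/
def TRS {F : Type*} [Field F] {n : ℕ} (α : Fin n → F) (k ℓ : ℕ) (t : Fin ℓ → ℕ)
    (h : Fin ℓ → Fin k) (η : Fin ℓ → F) : Set (Fin n → F) :=
  { c | ∃ u : Fin k → F, c = evalVec α (twistedPoly k ℓ t h η u) }

/-- The Reed–Solomon code `RS_{k,n}[α]`, as a subset of `F^n`. -/
def RS {F : Type*} [Field F] {n : ℕ} (α : Fin n → F) (k : ℕ) : Set (Fin n → F) :=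
  { c | ∃ f : F[X], f.degree ≤ ((k - 1 : ℕ) : WithBot ℕ) ∧ c = evalVec α f }


private lemma quad_zero {F : Type*} [Field F] (A B Cc x1 x2 x3 : F)
    (h12 : x1 ≠ x2) (h13 : x1 ≠ x3) (h23 : x2 ≠ x3)
    (h1 : A * x1 ^ 2 + B * x1 + Cc = 0)
    (h2 : A * x2 ^ 2 + B * x2 + Cc = 0)
    (h3 : A * x3 ^ 2 + B * x3 + Cc = 0) :
    A = 0 ∧ B = 0 ∧ Cc = 0 := by
  have hP : A * (x1 + x2) + B = 0 := by
    apply mul_left_cancel₀ (sub_ne_zero.mpr h12)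
    linear_combination h1 - h2
  have hQ : A * (x1 + x3) + B = 0 := by
    apply mul_left_cancel₀ (sub_ne_zero.mpr h13)
    linear_combination h1 - h3
  have hA : A = 0 := by
    apply mul_left_cancel₀ (sub_ne_zero.mpr h23)
    linear_combination hP - hQ
  have hB : B = 0 := by linear_combination hP - (x1 + x2) * hA
  exact ⟨hA, hB, by linear_combination h1 - x1 ^ 2 * hA - x1 * hB⟩

private lemma mobius_rigid {F : Type*} [Field F]
    (p q r s p' q' r' s' x1 x2 x3 y1 y2 y3 x y : F)
    (hdet : p * s - q * r ≠ 0)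
    (h12 : x1 ≠ x2) (h13 : x1 ≠ x3) (h23 : x2 ≠ x3)
    (e1 : y1 * (r * x1 + s) = p * x1 + q) (e1' : y1 * (r' * x1 + s') = p' * x1 + q')
    (e2 : y2 * (r * x2 + s) = p * x2 + q) (e2' : y2 * (r' * x2 + s') = p' * x2 + q')
    (e3 : y3 * (r * x3 + s) = p * x3 + q) (e3' : y3 * (r' * x3 + s') = p' * x3 + q')
    (hx' : y * (r' * x + s') = p' * x + q') (hden' : r' * x + s' ≠ 0) :
    r * x + s ≠ 0 ∧ y * (r * x + s) = p * x + q := by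
  have h1 : (p * r' - p' * r) * x1 ^ 2 + (p * s' + q * r' - p' * s - q' * r) * x1
      + (q * s' - q' * s) = 0 := by
    linear_combination (r * x1 + s) * e1' - (r' * x1 + s') * e1
  have h2 : (p * r' - p' * r) * x2 ^ 2 + (p * s' + q * r' - p' * s - q' * r) * x2
      + (q * s' - q' * s) = 0 := by
    linear_combination (r * x2 + s) * e2' - (r' * x2 + s') * e2
  have h3 : (p * r' - p' * r) * x3 ^ 2 + (p * s' + q * r' - p' * s - q' * r) * x3
      + (q * s' - q' * s) = 0 := by
    linear_combination (r * x3 + s) * e3' - (r' * x3 + s') * e3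
  obtain ⟨hA, hB, hC⟩ := quad_zero _ _ _ _ _ _ h12 h13 h23 h1 h2 h3
  have hmain : y * (r * x + s) = p * x + q := by
    apply mul_right_cancel₀ hden'
    linear_combination (r * x + s) * hx' - x ^ 2 * hA - x * hB - hC
  refine ⟨fun h0 => hdet ?_, hmain⟩
  have hpq0 : p * x + q = 0 := by rw [← hmain, h0, mul_zero]
  linear_combination p * h0 - r * hpq0

private lemma RS_prod_const {F : Type*} [Field F] {n k : ℕ}
    (hkn : k + 2 ≤ n)
    (α α' : Fin n → F) (hα : Function.Injective α) (hα' : Function.Injective α')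
    (hRS : RS α k = RS α' k) (S : Finset (Fin n)) (hS : S.card = k - 1) :
    ∃ c : F, c ≠ 0 ∧ ∀ i, (∏ j ∈ S, (α i - α j)) = c * ∏ j ∈ S, (α' i - α' j) := by
  classical
  set f : F[X] := ∏ j ∈ S, (X - C (α j)) with hf
  have hfm : f.Monic := monic_prod_of_monic _ _ fun j _ => monic_X_sub_C _
  have hfdeg : f.natDegree = k - 1 := by
    rw [hf, natDegree_prod _ _ fun j _ => X_sub_C_ne_zero (α j)]
    simp [hS]
  have hmem : evalVec α f ∈ RS α k := ⟨f, by
    rw [degree_eq_natDegree hfm.ne_zero, hfdeg], rfl⟩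
  rw [hRS] at hmem
  obtain ⟨g, hgdeg, hgev⟩ := hmem
  have heq : ∀ i, f.eval (α i) = g.eval (α' i) := fun i => congrFun hgev i
  -- an index outside S
  have hcompl : (Sᶜ : Finset (Fin n)).Nonempty := by
    rw [← Finset.card_pos, Finset.card_compl, hS]
    simp only [Fintype.card_fin]
    omega
  obtain ⟨i1, hi1⟩ := hcompl
  rw [Finset.mem_compl] at hi1
  have hfi1 : f.eval (α i1) ≠ 0 := by
    rw [hf, eval_prod]
    exact Finset.prod_ne_zero_iff.2 fun j hj => by
      simp only [eval_sub, eval_X, eval_C]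
      exact sub_ne_zero.mpr (fun h => hi1 (hα h ▸ hj))
  have hg0 : g ≠ 0 := fun h => hfi1 (by rw [heq i1, h, eval_zero])
  -- divisibility
  have hroots : (S.val.map α') ≤ g.roots := by
    rw [Multiset.le_iff_subset (S.nodup.map hα')]
    intro x hx
    obtain ⟨j, hj, rfl⟩ := Multiset.mem_map.1 hx
    have : f.eval (α j) = 0 := by
      rw [hf, eval_prod]
      exact Finset.prod_eq_zero (by exact hj) (by simp)
    rw [mem_roots hg0, IsRoot.def, ← heq j]
    exact this
  have hdvd : (∏ j ∈ S, (X - C (α' j))) ∣ g := by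
    have := (Multiset.prod_X_sub_C_dvd_iff_le_roots hg0 (S.val.map α')).2 hroots
    rwa [Multiset.map_map, ← Finset.prod_eq_multiset_prod] at this
  obtain ⟨h, hgh⟩ := hdvd
  have hPm : (∏ j ∈ S, (X - C (α' j))).Monic := monic_prod_of_monic _ _ fun j _ => monic_X_sub_C _
  have hPdeg : (∏ j ∈ S, (X - C (α' j))).natDegree = k - 1 := by
    rw [natDegree_prod _ _ fun j _ => X_sub_C_ne_zero (α' j)]
    simp [hS]
  have hh0 : h ≠ 0 := fun hh => hg0 (by rw [hgh, hh, mul_zero])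
  have hgnd : g.natDegree ≤ k - 1 := natDegree_le_iff_degree_le.2 hgdeg
  have hhnd : h.natDegree = 0 := by
    have := natDegree_mul hPm.ne_zero hh0
    rw [← hgh] at this
    omega
  obtain ⟨c, rfl⟩ : ∃ c, h = C c := ⟨h.coeff 0, eq_C_of_natDegree_eq_zero hhnd⟩
  have hc0 : c ≠ 0 := fun hc => hh0 (by rw [hc, map_zero])
  refine ⟨c, hc0, fun i => ?_⟩
  have := heq i
  rw [hf, eval_prod, hgh, eval_mul, eval_prod, eval_C] at this
  simp only [eval_sub, eval_X, eval_C] at this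
  rw [this, mul_comm]

private lemma exists_not_mem {n : ℕ} (U : Finset (Fin n)) (hU : U.card < n) :
    ∃ z, z ∉ U := by
  by_contra h
  push_neg at h
  have : U = Finset.univ := Finset.eq_univ_iff_forall.2 h
  rw [this, Finset.card_univ, Fintype.card_fin] at hU
  omega

private lemma mobius_on_compl {F : Type*} [Field F] {n m : ℕ}
    (hm : 1 ≤ m) (hmn : m + 3 ≤ n)
    (α α' : Fin n → F) (hα : Function.Injective α) (hα' : Function.Injective α')
    (Fm : ∀ S : Finset (Fin n), S.card = m →
      ∃ c : F, c ≠ 0 ∧ ∀ i, (∏ j ∈ S, (α i - α j)) = c * ∏ j ∈ S, (α' i - α' j))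
    (T : Finset (Fin n)) (hT : T.card = m - 1) :
    ∃ p q r s : F, p * s - q * r ≠ 0 ∧
      ∀ i ∉ T, r * α i + s ≠ 0 ∧ α' i * (r * α i + s) = p * α i + q := by
  classical
  obtain ⟨P, hPdef⟩ : ∃ P : Fin n → F, ∀ i, P i = ∏ j ∈ T, (α i - α j) :=
    ⟨_, fun _ => rfl⟩
  obtain ⟨Q, hQdef⟩ : ∃ Q : Fin n → F, ∀ i, Q i = ∏ j ∈ T, (α' i - α' j) :=
    ⟨_, fun _ => rfl⟩
  have hP : ∀ i ∉ T, P i ≠ 0 := fun i hi => by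
    rw [hPdef]
    exact Finset.prod_ne_zero_iff.2 fun j hj => sub_ne_zero.mpr fun h => hi (hα h ▸ hj)
  have hQ : ∀ i ∉ T, Q i ≠ 0 := fun i hi => by
    rw [hQdef]
    exact Finset.prod_ne_zero_iff.2 fun j hj => sub_ne_zero.mpr fun h => hi (hα' h ▸ hj)
  have H : ∀ a : Fin n, ∃ c : F, a ∉ T →
      c ≠ 0 ∧ ∀ i, (α i - α a) * P i = c * ((α' i - α' a) * Q i) := by
    intro a
    by_cases ha : a ∉ T
    · obtain ⟨c, hc0, hc⟩ := Fm (insert a T) (by rw [Finset.card_insert_of_notMem ha, hT]; omega)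
      refine ⟨c, fun _ => ⟨hc0, fun i => ?_⟩⟩
      have h2 := hc i
      rw [Finset.prod_insert ha, Finset.prod_insert ha] at h2
      rw [hPdef, hQdef]
      linear_combination h2
    · exact ⟨0, fun h => absurd ha (by simpa using h)⟩
  choose c hc using H
  obtain ⟨ρ, hρ⟩ : ∃ ρ : Fin n → F, ∀ i, ρ i = P i / Q i := ⟨_, fun _ => rfl⟩
  have hρQ : ∀ i ∉ T, ρ i * Q i = P i := fun i hi => by
    rw [hρ]; exact div_mul_cancel₀ (P i) (hQ i hi)
  have hρ0 : ∀ i ∉ T, ρ i ≠ 0 := fun i hi => by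
    rw [hρ]; exact div_ne_zero (hP i hi) (hQ i hi)
  have fact1 : ∀ i ∉ T, ∀ a ∉ T, ρ i * (α i - α a) = c a * (α' i - α' a) := by
    intro i hi a ha
    apply mul_right_cancel₀ (hQ i hi)
    linear_combination (hc a ha).2 i + (α i - α a) * hρQ i hi
  have fact2 : ∀ i ∉ T, ∀ a ∉ T, ρ i * c i = ρ a * c a := by
    intro i hi a ha
    rcases eq_or_ne i a with rfl | hne
    · rfl
    have key : (ρ i * c i - ρ a * c a) * (α i - α a) = 0 := by
      linear_combination c i * fact1 i hi a ha + c a * fact1 a ha i hi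
    rcases mul_eq_zero.1 key with h | h
    · exact sub_eq_zero.1 h
    · exact absurd (sub_eq_zero.1 h) fun hh => hne (hα hh)
  obtain ⟨a0, ha0⟩ := exists_not_mem T (by omega)
  have hγ : ρ a0 * c a0 ≠ 0 := mul_ne_zero (hρ0 a0 ha0) (hc a0 ha0).1
  have fact3 : ∀ i ∉ T, ∀ a ∉ T,
      ρ i * ρ a * (α i - α a) = (ρ a0 * c a0) * (α' i - α' a) := by
    intro i hi a ha
    linear_combination ρ a * fact1 i hi a ha + (α' i - α' a) * fact2 a ha a0 ha0
  by_cases hcase : ∀ i, i ∉ T → ρ i = ρ a0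
  · -- affine case
    refine ⟨ρ a0 * ρ a0, α' a0 * (ρ a0 * c a0) - ρ a0 * ρ a0 * α a0, 0, ρ a0 * c a0,
      ?_, fun i hi => ?_⟩
    · have h : ρ a0 * ρ a0 * (ρ a0 * c a0)
          - (α' a0 * (ρ a0 * c a0) - ρ a0 * ρ a0 * α a0) * 0
          = ρ a0 * ρ a0 * (ρ a0 * c a0) := by ring
      rw [h]
      exact mul_ne_zero (mul_ne_zero (hρ0 a0 ha0) (hρ0 a0 ha0)) hγ
    · refine ⟨by simpa using hγ, ?_⟩
      have h3 := fact3 i hi a0 ha0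
      rw [hcase i hi] at h3
      linear_combination -h3
  · push_neg at hcase
    obtain ⟨i0, hi0, hρne⟩ := hcase
    have hδ : ρ i0 - ρ a0 ≠ 0 := sub_ne_zero.mpr hρne
    obtain ⟨C1, hC1⟩ : ∃ C1 : F, C1 * (ρ i0 - ρ a0) = α i0 * ρ i0 - α a0 * ρ a0 :=
      ⟨(α i0 * ρ i0 - α a0 * ρ a0) / (ρ i0 - ρ a0), div_mul_cancel₀ _ hδ⟩
    obtain ⟨C2, hC2eq⟩ : ∃ C2 : F, C2 * (ρ i0 - ρ a0) = ρ i0 * ρ a0 * (α a0 - α i0) :=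
      ⟨(ρ i0 * ρ a0 * (α a0 - α i0)) / (ρ i0 - ρ a0), div_mul_cancel₀ _ hδ⟩
    have fact4 : ∀ l ∉ T, ρ l * (α l - C1) = C2 := by
      intro l hl
      have tri : ρ i0 * ρ a0 * (α i0 - α a0) + ρ a0 * ρ l * (α a0 - α l)
          + ρ l * ρ i0 * (α l - α i0) = 0 := by
        linear_combination fact3 i0 hi0 a0 ha0 + fact3 a0 ha0 l hl + fact3 l hl i0 hi0
      apply mul_right_cancel₀ hδ
      linear_combination tri - ρ l * hC1 - hC2eq
    have hi0a0 : i0 ≠ a0 := fun h => hρne (by rw [h])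
    have hC2 : C2 ≠ 0 := by
      intro h
      have h1 : α i0 = C1 := by
        have := fact4 i0 hi0
        rw [h, mul_eq_zero] at this
        rcases this with h' | h'
        · exact absurd h' (hρ0 i0 hi0)
        · exact sub_eq_zero.1 h'
      have h2 : α a0 = C1 := by
        have := fact4 a0 ha0
        rw [h, mul_eq_zero] at this
        rcases this with h' | h'
        · exact absurd h' (hρ0 a0 ha0)
        · exact sub_eq_zero.1 h'
      exact hi0a0 (hα (h1.trans h2.symm))
    have fact5 : ∀ l ∉ T, α l - C1 ≠ 0 := by
      intro l hl h
      exact hC2 (by rw [← fact4 l hl, h, mul_zero])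
    obtain ⟨w, hwdef⟩ : ∃ w : F, w = ρ a0 * c a0 * (α a0 - C1) := ⟨_, rfl⟩
    have hw : w ≠ 0 := by rw [hwdef]; exact mul_ne_zero hγ (fact5 a0 ha0)
    refine ⟨C2 * C2 + α' a0 * w, -(C2 * C2 * α a0) - α' a0 * C1 * w, w, -C1 * w,
      ?_, fun i hi => ?_⟩
    · have h : (C2 * C2 + α' a0 * w) * (-C1 * w) - (-(C2 * C2 * α a0) - α' a0 * C1 * w) * w
          = w * (C2 * C2) * (α a0 - C1) := by ring
      rw [h]
      exact mul_ne_zero (mul_ne_zero hw (mul_ne_zero hC2 hC2)) (fact5 a0 ha0)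
    · have h3 := fact3 i hi a0 ha0
      have h4i := fact4 i hi
      have h4a := fact4 a0 ha0
      have W : (ρ a0 * c a0) * (α' i - α' a0) * ((α i - C1) * (α a0 - C1))
          = C2 * C2 * (α i - α a0) := by
        linear_combination (-((α i - C1) * (α a0 - C1))) * h3
          + (α i - α a0) * (ρ a0 * (α a0 - C1)) * h4i + (α i - α a0) * C2 * h4a
      constructor
      · intro h
        exact (mul_ne_zero hw (fact5 i hi)) (by linear_combination h)
      · linear_combination W + (α i - C1) * (α' i - α' a0) * hwdef

private lemma pick3 {n : ℕ} (U : Finset (Fin n)) (hU : U.card + 3 ≤ n) :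
    ∃ x1 x2 x3 : Fin n, x1 ≠ x2 ∧ x1 ≠ x3 ∧ x2 ≠ x3 ∧ x1 ∉ U ∧ x2 ∉ U ∧ x3 ∉ U := by
  obtain ⟨x1, hx1⟩ := exists_not_mem U (by omega)
  obtain ⟨x2, hx2⟩ := exists_not_mem (insert x1 U)
    (by have := Finset.card_insert_le x1 U; omega)
  obtain ⟨x3, hx3⟩ := exists_not_mem (insert x2 (insert x1 U))
    (by have h1 := Finset.card_insert_le x2 (insert x1 U)
        have h2 := Finset.card_insert_le x1 U; omega)
  simp only [Finset.mem_insert, not_or] at hx2 hx3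
  exact ⟨x1, x2, x3, fun h => hx2.1 h.symm, fun h => hx3.2.1 h.symm,
    fun h => hx3.1 h.symm, hx1, hx2.2, hx3.2.2⟩

private lemma affine_of_Fm {F : Type*} [Field F] {n m : ℕ}
    (hm : 1 ≤ m) (hmn : m + 3 ≤ n)
    (α α' : Fin n → F) (hα : Function.Injective α) (hα' : Function.Injective α')
    (Fm : ∀ S : Finset (Fin n), S.card = m →
      ∃ c : F, c ≠ 0 ∧ ∀ i, (∏ j ∈ S, (α i - α j)) = c * ∏ j ∈ S, (α' i - α' j)) :
    ∃ a : F, a ≠ 0 ∧ ∃ b : F, ∀ i, α' i = a * α i + b := by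
  classical
  obtain ⟨T0, -, hT0⟩ := Finset.exists_subset_card_eq
    (show m - 1 ≤ (Finset.univ : Finset (Fin n)).card by
      rw [Finset.card_univ, Fintype.card_fin]; omega)
  obtain ⟨p, q, r, s, hdet, hrel⟩ := mobius_on_compl hm hmn α α' hα hα' Fm T0 hT0
  have hglob : ∀ i, r * α i + s ≠ 0 ∧ α' i * (r * α i + s) = p * α i + q := by
    intro i
    by_cases hi : i ∈ T0
    · obtain ⟨z, hz⟩ := exists_not_mem T0 (by omega)
      have hiz : i ≠ z := fun h => hz (h ▸ hi)
      have hzE : z ∉ T0.erase i := fun h => hz (Finset.erase_subset _ _ h)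
      have hT1card : (insert z (T0.erase i)).card = m - 1 := by
        rw [Finset.card_insert_of_notMem hzE, Finset.card_erase_of_mem hi, hT0]
        have : 1 ≤ T0.card := Finset.card_pos.2 ⟨i, hi⟩
        rw [hT0] at this
        omega
      have hiT1 : i ∉ insert z (T0.erase i) := by
        simp [hiz, Finset.notMem_erase]
      obtain ⟨p', q', r', s', hdet', hrel'⟩ :=
        mobius_on_compl hm hmn α α' hα hα' Fm (insert z (T0.erase i)) hT1card
      have hins : (insert z T0).card ≤ m := by
        have := Finset.card_insert_le z T0; omega
      obtain ⟨x1, x2, x3, h12, h13, h23, hx1, hx2, hx3⟩ := pick3 (insert z T0) (by omega)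
      have hsub1 : insert z (T0.erase i) ⊆ insert z T0 :=
        Finset.insert_subset_insert z (Finset.erase_subset i T0)
      have hsub0 : T0 ⊆ insert z T0 := Finset.subset_insert z T0
      have m1 := hrel x1 (fun h => hx1 (hsub0 h))
      have m2 := hrel x2 (fun h => hx2 (hsub0 h))
      have m3 := hrel x3 (fun h => hx3 (hsub0 h))
      have m1' := hrel' x1 (fun h => hx1 (hsub1 h))
      have m2' := hrel' x2 (fun h => hx2 (hsub1 h))
      have m3' := hrel' x3 (fun h => hx3 (hsub1 h))
      have mi' := hrel' i hiT1
      exact mobius_rigid p q r s p' q' r' s' (α x1) (α x2) (α x3)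
        (α' x1) (α' x2) (α' x3) (α i) (α' i) hdet
        (fun h => h12 (hα h)) (fun h => h13 (hα h)) (fun h => h23 (hα h))
        m1.2 m1'.2 m2.2 m2'.2 m3.2 m3'.2 mi'.2 mi'.1
    · exact hrel i hi
  by_cases hr : r = 0
  · have hps : p * s ≠ 0 := by
      intro h; apply hdet; rw [hr]; linear_combination h
    have hp : p ≠ 0 := fun h => hps (by rw [h, zero_mul])
    have hs : s ≠ 0 := fun h => hps (by rw [h, mul_zero])
    refine ⟨p / s, div_ne_zero hp hs, q / s, fun i => ?_⟩
    have h2 := (hglob i).2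
    rw [hr] at h2
    field_simp
    linear_combination h2
  · exfalso
    have hν : ∀ i i' : Fin n, (r * α i + s) ^ m = (r * α i' + s) ^ m := by
      intro i i'
      obtain ⟨J, hJsub, hJcard⟩ := Finset.exists_subset_card_eq
        (show m ≤ (({i, i'} : Finset (Fin n))ᶜ).card by
          rw [Finset.card_compl, Fintype.card_fin]
          have := Finset.card_insert_le i ({i'} : Finset (Fin n))
          have h1 : ({i'} : Finset (Fin n)).card = 1 := Finset.card_singleton i'
          omega)
      have hiJ : i ∉ J := fun h => by
        have := hJsub h; rw [Finset.mem_compl] at this; exact this (by simp)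
      have hi'J : i' ∉ J := fun h => by
        have := hJsub h; rw [Finset.mem_compl] at this; exact this (by simp)
      obtain ⟨cJ, hcJ0, hcJ⟩ := Fm J hJcard
      have key : ∀ l : Fin n,
          (∏ j ∈ J, (α' l - α' j)) * ((r * α l + s) ^ m * ∏ j ∈ J, (r * α j + s))
          = (p * s - q * r) ^ m * ∏ j ∈ J, (α l - α j) := by
        intro l
        have hpow : (r * α l + s) ^ m = ∏ _j ∈ J, (r * α l + s) := by
          rw [Finset.prod_const, hJcard]
        have hpow2 : (p * s - q * r) ^ m = ∏ _j ∈ J, (p * s - q * r) := by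
          rw [Finset.prod_const, hJcard]
        rw [hpow, hpow2, ← Finset.prod_mul_distrib, ← Finset.prod_mul_distrib,
          ← Finset.prod_mul_distrib]
        apply Finset.prod_congr rfl
        intro j hj
        linear_combination (r * α j + s) * (hglob l).2 - (r * α l + s) * (hglob j).2
      have hWne : (∏ j ∈ J, (r * α j + s)) ≠ 0 :=
        Finset.prod_ne_zero_iff.2 fun j _ => (hglob j).1
      have hQne : ∀ l ∉ J, (∏ j ∈ J, (α' l - α' j)) ≠ 0 := fun l hl =>
        Finset.prod_ne_zero_iff.2 fun j hj => sub_ne_zero.mpr fun h => hl (hα' h ▸ hj)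
      have h1 : (r * α i + s) ^ m * (∏ j ∈ J, (r * α j + s))
          = (p * s - q * r) ^ m * cJ := by
        apply mul_left_cancel₀ (hQne i hiJ)
        linear_combination key i + (p * s - q * r) ^ m * hcJ i
      have h2 : (r * α i' + s) ^ m * (∏ j ∈ J, (r * α j + s))
          = (p * s - q * r) ^ m * cJ := by
        apply mul_left_cancel₀ (hQne i' hi'J)
        linear_combination key i' + (p * s - q * r) ^ m * hcJ i'
      exact mul_right_cancel₀ hWne (h1.trans h2.symm)
    have hn0 : 0 < n := by omega
    set i0 : Fin n := ⟨0, hn0⟩ with hi0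
    set Z : F[X] := (Polynomial.C r * Polynomial.X + Polynomial.C s) ^ m
      - Polynomial.C ((r * α i0 + s) ^ m) with hZ
    have heval : ∀ i, Z.eval (α i) = 0 := by
      intro i
      simp only [hZ, eval_sub, eval_pow, eval_add, eval_mul, eval_C, eval_X, sub_eq_zero]
      exact hν i i0
    have hZdeg : Z.natDegree ≤ m := by
      refine (natDegree_sub_le _ _).trans ?_
      have h1 : ((Polynomial.C r * Polynomial.X + Polynomial.C s) ^ m).natDegree = m := by
        rw [natDegree_pow, natDegree_linear hr, mul_one]
      rw [h1, natDegree_C]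
      simp
    have hZ0 : Z = 0 := Polynomial.eq_zero_of_natDegree_lt_card_of_eval_eq_zero Z hα heval
      (by rw [Fintype.card_fin]; omega)
    have hEq : (Polynomial.C r * Polynomial.X + Polynomial.C s) ^ m
        = Polynomial.C ((r * α i0 + s) ^ m) := by
      rw [← sub_eq_zero]; exact hZ0
    have := congrArg natDegree hEq
    rw [natDegree_pow, natDegree_linear hr, mul_one, natDegree_C] at this
    omega

/-- Sidelnikov–Shestakov: over a finite field, if 2 ≤ k ≤ n − 2 and
α, α' have pairwise distinct entries with RS_{k,n}[α] = RS_{k,n}[α'], then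
α' = aα + b·1 for some a ≠ 0 and b. -/
theorem RS_eq_implies_affine
    {F : Type*} [Field F] [Fintype F] {n k : ℕ}
    (hk : 2 ≤ k) (hkn : k ≤ n - 2)
    (α α' : Fin n → F) (hα : Function.Injective α) (hα' : Function.Injective α')
    (hRS : RS α k = RS α' k) :
    ∃ a : F, a ≠ 0 ∧ ∃ b : F, ∀ i, α' i = a * α i + b := by
  have hn : k + 2 ≤ n := by omega
  have hm : 1 ≤ k - 1 := by omega
  have hmn : (k - 1) + 3 ≤ n := by omega
  exact affine_of_Fm hm hmn α α' hα hα'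
    (fun S hS => RS_prod_const hn α α' hα hα' hRS S hS)
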